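/- Let R be a commutative ring and q, m ∈ R. For all natural numbers n and k with k ≤ n, the (q,0)-Whitney numbers of the second kind are rescaled q-Stirling numbers: W_{m,0,q}(n,k) = m^{n-k} * S_q(n,k). -/

import Mathlib

/-- The q-integer [n]_q. -/
def qInt {R : Type*} [CommRing R] (q : R) (n : ℕ) : R :=
  ∑ i ∈ Finset.range n, q ^ i

/-- The q-Stirling numbers of the second kind. -/
def qStirling {R : Type*} [CommRing R] (q : R) : ℕ → ℕ → R
  | 0, 0 => 1
  | 0, _ + 1 => 0
  | _ + 1, 0 => 0
  | n + 1, k + 1 => q ^ k * qStirling q n k + qInt q (k + 1) * qStirling q n (k + 1)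

/-- The (q,r)-Whitney numbers of the second kind. -/
def qWhitney {R : Type*} [CommRing R] (q m r : R) : ℕ → ℕ → R
  | 0, 0 => 1
  | 0, _ + 1 => 0
  | n + 1, 0 => r * qWhitney q m r n 0
  | n + 1, k + 1 =>
      q ^ k * qWhitney q m r n k + (m * qInt q (k + 1) + r) * qWhitney q m r n (k + 1)

lemma qStirling_eq_zero_of_lt {R : Type*} [CommRing R] (q : R) :
    ∀ n k : ℕ, n < k → qStirling q n k = 0 := by
  intro n
  induction n with
  | zero =>
    intro k hk
    obtain ⟨k', rfl⟩ := Nat.exists_eq_add_of_lt hk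
    simp [qStirling]
  | succ n ih =>
    intro k hk
    obtain ⟨k', rfl⟩ : ∃ k', k = k' + 1 := ⟨k - 1, by omega⟩
    have h1 : n < k' := by omega
    rw [qStirling, ih k' h1, ih (k' + 1) (by omega)]
    ring

theorem qWhitney_zero_eq' {R : Type*} [CommRing R] (q m : R) :
    ∀ n k : ℕ, qWhitney q m 0 n k = m ^ (n - k) * qStirling q n k := by
  intro n
  induction n with
  | zero =>
    intro k
    cases k with
    | zero => simp [qWhitney, qStirling]
    | succ k => simp [qWhitney, qStirling]
  | succ n ih =>
    intro k
    cases k with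
    | zero =>
      rw [qWhitney, qStirling]
      ring
    | succ k =>
      rw [qWhitney, qStirling, ih k, ih (k + 1)]
      rcases lt_or_ge k n with h | h
      · have h1 : n - k = (n - (k + 1)) + 1 := by omega
        have h2 : n + 1 - (k + 1) = n - k := by omega
        rw [h1, h2, h1]
        ring
      · rcases eq_or_lt_of_le h with rfl | h'
        · have h2 : n + 1 - (n + 1) = 0 := by omega
          rw [qStirling_eq_zero_of_lt q n (n + 1) (by omega), Nat.sub_self, h2]
          ring
        · rw [qStirling_eq_zero_of_lt q n (k + 1) (by omega),
            qStirling_eq_zero_of_lt q n k h']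
          ring

/-- (q,0)-Whitney numbers are rescaled q-Stirling numbers. -/
theorem qWhitney_zero_eq {R : Type*} [CommRing R] (q m : R) (n k : ℕ) (hk : k ≤ n) :
    qWhitney q m 0 n k = m ^ (n - k) * qStirling q n k :=
  qWhitney_zero_eq' q m n k
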